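/- Suppose A, B ⊆ ℂ are closed sets such that A is contained in the open upper half-plane {z : Im z > 0} and B is contained in the open lower half-plane {z : Im z < 0}. Then for any point (x, y) = x + iy in Equi(A, B) with y > 0, the vertical segment from x to x + iy is disjoint from A ∪ B; consequently Equi(A, B) is homotopic into the real axis within ℂ \ (A ∪ B) by the straight-line vertical homotopy (x + iy, s) ↦ x + i(1−s)y, which avoids A ∪ B for all s ∈ [0,1] whenever x + iy ∈ Equi(A,B). -/

import Mathlib

open Metric Set

theorem equidistant_vertical_homotopy
    (A B : Set ℂ) (hA : IsClosed A) (hB : IsClosed B)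
    (hAne : A.Nonempty) (hBne : B.Nonempty)
    (hAup : ∀ z ∈ A, 0 < z.im) (hBlow : ∀ z ∈ B, z.im < 0) :
    (∀ z : ℂ, Metric.infDist z A = Metric.infDist z B → 0 < z.im →
      ∀ s ∈ Set.Icc (0:ℝ) z.im, ((z.re : ℂ) + (s : ℂ) * Complex.I) ∉ A ∪ B) ∧
    (∀ z : ℂ, Metric.infDist z A = Metric.infDist z B →
      ∀ s ∈ Set.Icc (0:ℝ) 1,
        ((z.re : ℂ) + ((1 - s) * z.im : ℂ) * Complex.I) ∉ A ∪ B) := by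
  have key : ∀ z : ℂ, Metric.infDist z A = Metric.infDist z B → ∀ t : ℝ,
      ((0 ≤ t ∧ t ≤ z.im) ∨ (z.im ≤ t ∧ t ≤ 0)) →
      ((z.re : ℂ) + (t : ℂ) * Complex.I) ∉ A ∪ B := by
    intro z heq t ht hp
    set y := z.im with hy
    set p : ℂ := (z.re : ℂ) + (t : ℂ) * Complex.I with hpdef
    have hpim : p.im = t := by simp [hpdef]
    have hdiff : z - p = ((y - t : ℝ) : ℂ) * Complex.I := by
      apply Complex.ext <;> simp [hpdef, hy]
    have hd : dist z p = |y - t| := by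
      rw [Complex.dist_eq, hdiff, norm_mul, Complex.norm_I, Complex.norm_real, Real.norm_eq_abs, mul_one]
    have distB : ∀ b ∈ B, y - b.im ≤ dist z b := by
      intro b hb
      have h1 : |(z - b).im| ≤ ‖z - b‖ := Complex.abs_im_le_norm _
      rw [Complex.dist_eq]
      calc y - b.im = (z - b).im := by simp [hy]
        _ ≤ |(z - b).im| := le_abs_self _
        _ ≤ _ := h1
    have distA : ∀ a ∈ A, a.im - y ≤ dist z a := by
      intro a ha
      have h1 : |(z - a).im| ≤ ‖z - a‖ := Complex.abs_im_le_norm _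
      rw [Complex.dist_eq]
      calc a.im - y = -((z - a).im) := by simp [hy]
        _ ≤ |(z - a).im| := neg_le_abs _
        _ ≤ _ := h1
    rcases hp with hpA | hpB
    · have htpos : 0 < t := by have := hAup p hpA; rwa [hpim] at this
      have hcase : 0 ≤ t ∧ t ≤ y := by
        rcases ht with h | h
        · exact h
        · linarith [h.2]
      have hAle : Metric.infDist z A ≤ y - t := by
        have := Metric.infDist_le_dist_of_mem (x := z) hpA
        rwa [hd, abs_of_nonneg (by linarith)] at this
      have hBge : y ≤ Metric.infDist z B := by
        refine le_of_not_gt fun h => ?_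
        rcases (Metric.infDist_lt_iff hBne).1 h with ⟨b, hb, hlt⟩
        have := distB b hb
        have := hBlow b hb
        linarith
      linarith [heq ▸ hAle]
    · have htneg : t < 0 := by have := hBlow p hpB; rwa [hpim] at this
      have hcase : y ≤ t ∧ t ≤ 0 := by
        rcases ht with h | h
        · linarith [h.1]
        · exact h
      have hBle : Metric.infDist z B ≤ t - y := by
        have := Metric.infDist_le_dist_of_mem (x := z) hpB
        rwa [hd, abs_of_nonpos (by linarith), neg_sub] at this
      have hAge : -y ≤ Metric.infDist z A := by
        refine le_of_not_gt fun h => ?_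
        rcases (Metric.infDist_lt_iff hAne).1 h with ⟨a, ha, hlt⟩
        have := distA a ha
        have := hAup a ha
        linarith
      rw [heq] at hAge
      linarith
  constructor
  · intro z heq hzim s hs
    exact key z heq s (Or.inl ⟨hs.1, hs.2⟩)
  · intro z heq s hs
    rcases le_or_gt 0 z.im with hzy | hzy
    · have h := key z heq ((1 - s) * z.im) (Or.inl ⟨?ha, ?hb⟩)
      · push_cast at h ⊢; exact h
      · exact mul_nonneg (by linarith [hs.2]) hzy
      · nlinarith [hs.1, hs.2]
    · have h := key z heq ((1 - s) * z.im) (Or.inr ⟨?hc, ?hd2⟩)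
      · push_cast at h ⊢; exact h
      · nlinarith [hs.1, hs.2]
      · exact mul_nonpos_of_nonneg_of_nonpos (by linarith [hs.2]) hzy.le
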